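/- Let (A; R) be a finite set system with δ ≥ 0, let t : R → A be a transversal with image A \ Y, and suppose F ≤ A. Then Z = {f ∈ F \ Y : t⁻¹(f) ⊄ F} ∪ (F ∩ Y) is a basis of the restriction of the matroid PG(A; R) to F. -/

import Mathlib

open Finset

/-- Predimension of `X`: `|X| - |{r ∈ R : r ⊆ X}|`. -/
def delta {α : Type*} [DecidableEq α] (R : Finset (Finset α)) (X : Finset α) : ℤ :=
  (X.card : ℤ) - ((R.filter (fun r => r ⊆ X)).card : ℤ)

/-- If `t` is a transversal of `R` with image `A \ Y` and `F ≤ A`, then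
`Z = {f ∈ F \ Y : t⁻¹ f ⊄ F} ∪ (F ∩ Y)` is a basis of the restriction `PG(F; R|F)`. -/
theorem basis_of_selfSufficient {α : Type*} [DecidableEq α]
    (A : Finset α) (R : Finset (Finset α))
    (hR : ∀ r ∈ R, r.Nonempty ∧ r ⊆ A)
    (hpos : ∀ X ⊆ A, 0 ≤ delta R X)
    (t : Finset α → α) (ht : (∀ r ∈ R, t r ∈ r) ∧ Set.InjOn t ↑R)
    (Y : Finset α) (hY : Y ⊆ A) (himg : R.image t = A \ Y)
    (F : Finset α) (hFA : F ⊆ A)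
    (hF : ∀ F' : Finset α, F ⊆ F' → F' ⊆ A → delta R F ≤ delta R F')
    (dF : Finset α → ℤ)
    (hdF : ∀ X ⊆ F, IsLeast
      {z : ℤ | ∃ Z : Finset α, X ⊆ Z ∧ Z ⊆ F ∧
        z = delta (R.filter (fun r => r ⊆ F)) Z} (dF X)) :
    dF (F.filter (fun f => (∃ r ∈ R, t r = f ∧ ¬ r ⊆ F) ∨ f ∈ Y)) =
      ((F.filter (fun f => (∃ r ∈ R, t r = f ∧ ¬ r ⊆ F) ∨ f ∈ Y)).card : ℤ) ∧
    dF (F.filter (fun f => (∃ r ∈ R, t r = f ∧ ¬ r ⊆ F) ∨ f ∈ Y)) = dF F := by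
  classical
  obtain ⟨htR, htInj⟩ := ht
  set Z := F.filter (fun f => (∃ r ∈ R, t r = f ∧ ¬ r ⊆ F) ∨ f ∈ Y) with hZdef
  have hZF : Z ⊆ F := Finset.filter_subset _ _
  -- key: a relation contained in F has its transversal point in F \ Z
  have key : ∀ r ∈ R, r ⊆ F → t r ∈ F \ Z := by
    intro r hr hrF
    have htr : t r ∈ F := hrF (htR r hr)
    rw [Finset.mem_sdiff]
    refine ⟨htr, fun hmem => ?_⟩
    rcases (Finset.mem_filter.mp hmem).2 with ⟨r', hr', hteq, hr'F⟩ | hY'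
    · exact hr'F (by rwa [htInj (Finset.mem_coe.mpr hr') (Finset.mem_coe.mpr hr) hteq])
    · have h1 : t r ∈ A \ Y := by rw [← himg]; exact Finset.mem_image_of_mem t hr
      exact (Finset.mem_sdiff.mp h1).2 hY'
  -- no relation of R|F is contained in Z
  have hZrel : (R.filter (fun r => r ⊆ F)).filter (fun r => r ⊆ Z) = ∅ := by
    rw [Finset.filter_eq_empty_iff]
    intro r hrmem hrZ
    rw [Finset.mem_filter] at hrmem
    exact (Finset.mem_sdiff.mp (key r hrmem.1 hrmem.2)).2 (hrZ (htR r hrmem.1))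
  have deltaZ : delta (R.filter (fun r => r ⊆ F)) Z = (Z.card : ℤ) := by
    simp [delta, hZrel]
  -- counting bound: relations of R|F contained in W inject into W \ Z
  have hinj : ∀ W ⊆ F, Z ⊆ W →
      ((R.filter (fun r => r ⊆ F)).filter (fun r => r ⊆ W)).card ≤ (W \ Z).card := by
    intro W hWF hZW
    apply Finset.card_le_card_of_injOn t
    · intro r hrmem
      simp only [Finset.mem_coe, Finset.mem_filter] at hrmem
      obtain ⟨⟨hr, hrF⟩, hrW⟩ := hrmem
      have hk := key r hr hrF
      rw [Finset.mem_coe, Finset.mem_sdiff]; rw [Finset.mem_sdiff] at hk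
      exact ⟨hrW (htR r hr), hk.2⟩
    · intro r1 h1 r2 h2 heq
      rw [Finset.mem_coe, Finset.mem_filter, Finset.mem_filter] at h1 h2
      exact htInj (Finset.mem_coe.mpr h1.1.1) (Finset.mem_coe.mpr h2.1.1) heq
  -- bijection: t maps R|F bijectively onto F \ Z
  have hbij : (R.filter (fun r => r ⊆ F)).card = (F \ Z).card := by
    apply Finset.card_bij (fun r _ => t r)
    · intro r hr
      rw [Finset.mem_filter] at hr
      exact key r hr.1 hr.2
    · intro r1 h1 r2 h2 heq
      rw [Finset.mem_filter] at h1 h2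
      exact htInj (Finset.mem_coe.mpr h1.1) (Finset.mem_coe.mpr h2.1) heq
    · intro f hf
      rw [Finset.mem_sdiff] at hf
      have hfA : f ∈ A \ Y := Finset.mem_sdiff.mpr ⟨hFA hf.1,
        fun hY' => hf.2 (Finset.mem_filter.mpr ⟨hf.1, Or.inr hY'⟩)⟩
      rw [← himg] at hfA
      obtain ⟨r, hr, hteq⟩ := Finset.mem_image.mp hfA
      refine ⟨r, Finset.mem_filter.mpr ⟨hr, ?_⟩, hteq⟩
      by_contra hrF
      exact hf.2 (Finset.mem_filter.mpr ⟨hf.1, Or.inl ⟨r, hr, hteq, hrF⟩⟩)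
  -- value of dF F
  have hdFF : dF F = (Z.card : ℤ) := by
    obtain ⟨hmem, hlb⟩ := hdF F (Finset.Subset.refl F)
    obtain ⟨W, hFW, hWF, hval⟩ := hmem
    have hWeq : W = F := Finset.Subset.antisymm hWF hFW
    rw [hWeq] at hval
    rw [hval]
    have hfilt : (R.filter (fun r => r ⊆ F)).filter (fun r => r ⊆ F) =
        R.filter (fun r => r ⊆ F) := by
      apply Finset.filter_true_of_mem
      intro r hr
      exact (Finset.mem_filter.mp hr).2
    simp only [delta, hfilt, hbij]
    have hc := Finset.card_sdiff_of_subset hZF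
    have hc2 := Finset.card_le_card hZF
    omega
  -- value of dF Z
  obtain ⟨hmemZ, hlbZ⟩ := hdF Z hZF
  have hle : dF Z ≤ (Z.card : ℤ) := by
    have := hlbZ ⟨Z, Finset.Subset.refl Z, hZF, rfl⟩
    rwa [deltaZ] at this
  have hge : (Z.card : ℤ) ≤ dF Z := by
    obtain ⟨W, hZW, hWF, hval⟩ := hmemZ
    rw [hval]
    simp only [delta]
    have h1 := hinj W hWF hZW
    have h2 := Finset.card_sdiff_of_subset hZW
    have h3 := Finset.card_le_card hZW
    omega
  have hZval : dF Z = (Z.card : ℤ) := le_antisymm hle hge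
  exact ⟨hZval, by rw [hZval, hdFF]⟩
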